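/- Let L be a countable relational language in which every relation symbol has arity at most t, where t ≥ 2. Let M be an ultrahomogeneous L-structure such that Th(M) has quantifier elimination. If M has the externally definable ā-Ramsey property for every ā ∈ Age(M) with |ā| < t, then M has the externally definable Ramsey property. (Lemma 3.14.) -/

import Mathlib

open FirstOrder FirstOrder.Language CategoryTheory

universe u v w

namespace EDRP

/-- The colouring `χ` of the copies of `A` in `M` (copies identified with embeddings
`A ↪[L] M`) is externally definable by the formulas `φ i`: there are an elementary extension
`N ⪰ M` and a parameter tuple `ē` in `N` such that `χ(f(ā)) = i` iff `N ⊨ φ i (ē, f(ā))`. -/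
def ExtDefinableBy (L : FirstOrder.Language.{u, v}) (M : Type w) [L.Structure M]
    (A : Type w) [L.Structure A]
    {k e : ℕ} (φ : Fin k → L.Formula (Fin e ⊕ A)) (χ : (A ↪[L] M) → Fin k) : Prop :=
  ∃ (N : Bundled.{w} L.Structure) (emb : M ↪ₑ[L] N) (eb : Fin e → N),
    ∀ (f : A ↪[L] M) (i : Fin k),
      χ f = i ↔ (φ i).Realize (Sum.elim eb fun a => emb (f a))

/-- `χ` is an externally definable `k`-colouring of the copies of `A` in `M`. -/
def ExtDefinable (L : FirstOrder.Language.{u, v}) (M : Type w) [L.Structure M]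
    (A : Type w) [L.Structure A] {k : ℕ} (χ : (A ↪[L] M) → Fin k) : Prop :=
  ∃ (e : ℕ) (φ : Fin k → L.Formula (Fin e ⊕ A)), ExtDefinableBy L M A φ χ

/-- The copy of `B` in `M` given by the embedding `g` is `χ`-monochromatic: `χ` is constant
on the copies of `A` lying inside the image of `g`. -/
def MonochromaticOn (L : FirstOrder.Language.{u, v}) (M : Type w) [L.Structure M]
    (A B : Type w) [L.Structure A] [L.Structure B]
    {k : ℕ} (χ : (A ↪[L] M) → Fin k) (g : B ↪[L] M) : Prop :=
  ∀ f₁ f₂ : A ↪[L] M, Set.range (f₁ : A → M) ⊆ Set.range (g : B → M) →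
    Set.range (f₂ : A → M) ⊆ Set.range (g : B → M) → χ f₁ = χ f₂

/-- `M` has the externally definable `ā`-Ramsey property, where `ā` enumerates `A`:
for every `k ≥ 1`, every `B` in the age of `M` and every externally definable `k`-colouring `χ`
of the copies of `A` in `M`, there is a `χ`-monochromatic copy of `B` in `M`. -/
def ExtDefARamsey (L : FirstOrder.Language.{u, v}) (M : Type w) [L.Structure M]
    (A : Type w) [L.Structure A] : Prop :=
  ∀ (k : ℕ), 1 ≤ k → ∀ (B : Type w) [L.Structure B], Finite B → Nonempty (B ↪[L] M) →
    ∀ χ : (A ↪[L] M) → Fin k, ExtDefinable L M A χ →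
      ∃ g : B ↪[L] M, MonochromaticOn L M A B χ g

/-- `M` has the externally definable Ramsey property. -/
def ExtDefRamsey (L : FirstOrder.Language.{u, v}) (M : Type w) [L.Structure M] : Prop :=
  ∀ (A : Type w) [L.Structure A], Finite A → Nonempty (A ↪[L] M) → ExtDefARamsey L M A

/-- `Th(M)` has quantifier elimination: every formula is equivalent modulo the complete theory
of `M` to a quantifier-free formula. -/
def HasQE (L : FirstOrder.Language.{u, v}) (M : Type w) [L.Structure M] : Prop :=
  ∀ (n : ℕ) (φ : L.Formula (Fin n)), ∃ ψ : L.Formula (Fin n),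
    ψ.IsQF ∧ FirstOrder.Language.Theory.Iff (L.completeTheory M) φ ψ

open FirstOrder.Language.Structure Filter

attribute [local instance] Classical.propDecidable

variable {L : FirstOrder.Language.{u, v}}

section Basics

variable [L.IsRelational]

/-- Any term in a relational language is a variable. -/
lemma term_eq_var {ζ : Type*} (t : L.Term ζ) : ∃ x, t = Term.var x := by
  cases t with
  | var x => exact ⟨x, rfl⟩
  | func f _ => exact isEmptyElim f

/-- The list of relation symbols occurring in a bounded formula. -/
def relList {β : Type*} : ∀ {n : ℕ}, L.BoundedFormula β n → List (Σ k, L.Relations k)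
  | _, BoundedFormula.falsum => []
  | _, BoundedFormula.equal _ _ => []
  | _, @BoundedFormula.rel _ _ _ k R _ => [⟨k, R⟩]
  | _, BoundedFormula.imp φ ψ => relList φ ++ relList ψ
  | _, BoundedFormula.all φ => relList φ

/-- Truth of a quantifier-free formula only depends on the atomic data of the valuation. -/
lemma support_lemma {β : Type*} {W : Type*} [L.Structure W]
    {θ : L.Formula β} (hθ : θ.IsQF) (v₁ v₂ : β → W)
    (heq : ∀ x y : β, (v₁ x = v₁ y) ↔ (v₂ x = v₂ y))
    (hrel : ∀ (r : ℕ) (R : L.Relations r) (ts : Fin r → β),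
      (⟨r, R⟩ : Σ k, L.Relations k) ∈ relList θ →
      (RelMap R (v₁ ∘ ts) ↔ RelMap R (v₂ ∘ ts))) :
    θ.Realize v₁ ↔ θ.Realize v₂ := by
  induction hθ with
  | falsum => exact Iff.rfl
  | @of_isAtomic θ h =>
    cases h with
    | equal t₁ t₂ =>
      obtain ⟨x, rfl⟩ := term_eq_var t₁
      obtain ⟨y, rfl⟩ := term_eq_var t₂
      cases x with
      | inl x =>
        cases y with
        | inl y =>
          simpa [Formula.Realize, BoundedFormula.Realize, Term.bdEqual] using heq x y
        | inr y => exact isEmptyElim y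
      | inr x => exact isEmptyElim x
    | @rel r R ts =>
      choose xs hxs using fun i => term_eq_var (ts i)
      have hts : ts = fun i => Term.var (xs i) := funext hxs
      subst hts
      have hxs' : ∀ i, ∃ x : β, xs i = Sum.inl x := by
        intro i
        cases hx : xs i with
        | inl x => exact ⟨x, rfl⟩
        | inr x => exact isEmptyElim x
      choose ys hys using hxs'
      have hys' : xs = Sum.inl ∘ ys := funext hys
      subst hys'
      have := hrel r R ys (List.mem_singleton_self _)
      simpa [Formula.Realize, BoundedFormula.Realize, Term.realize, Function.comp_def] using this
  | imp h₁ h₂ ih₁ ih₂ =>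
    rename_i θ₁ θ₂
    have e₁ := ih₁ (fun r R ts hmem => hrel r R ts (by simp [relList, hmem]))
    have e₂ := ih₂ (fun r R ts hmem => hrel r R ts (by simp [relList, hmem]))
    simp only [Formula.Realize, BoundedFormula.Realize] at *
    rw [e₁, e₂]

end Basics


section Sub

variable [L.IsRelational] {A : Type w} [L.Structure A]

/-- The induced structure on a finite subset of a structure (in a relational language). -/
def finsetStr (S : Finset A) : L.Structure {x // x ∈ S} where
  funMap {n} f := isEmptyElim f
  RelMap {n} R x := RelMap R (fun i => (x i : A))

attribute [local instance] finsetStr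

/-- Inclusion of a finite subset into the structure, as an embedding. -/
def inclS (S : Finset A) : ({x // x ∈ S}) ↪[L] A where
  toEmbedding := ⟨Subtype.val, Subtype.val_injective⟩
  map_fun' := fun {n} f _ => isEmptyElim f
  map_rel' := fun {n} R x => Iff.rfl

@[simp] lemma inclS_apply (S : Finset A) (x : {x // x ∈ S}) : inclS (L := L) S x = (x : A) := rfl

end Sub

section Pat

variable [L.IsRelational]

/-- The space of "atomic pattern" colours for a tuple indexed by `γ` together with `e`
parameters, relative to a list `RL` of relation symbols. -/
abbrev PatColour (e : ℕ) (RL : List (Σ k, L.Relations k)) (γ : Type w) : Type w :=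
  (∀ j : Fin RL.length, (Fin (RL.get j).1 → (Fin e ⊕ γ)) → Bool)
    × ((Fin e ⊕ γ) → (Fin e ⊕ γ) → Bool)


/-- The atomic pattern of a valuation. -/
noncomputable def pattern (e : ℕ) (RL : List (Σ k, L.Relations k)) {γ : Type w}
    {W : Type*} [L.Structure W] (w : Fin e → W) (v : γ → W) : PatColour e RL γ :=
  ⟨fun j ts => decide (RelMap (RL.get j).2 (Sum.elim w v ∘ ts)),
   fun x y => decide (Sum.elim w v x = Sum.elim w v y)⟩

end Pat

section Formulas

variable {β : Type w}

/-- Finite conjunction of a list of formulas. -/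
def conjList : List (L.Formula β) → L.Formula β
  | [] => ⊤
  | φ :: l => φ ⊓ conjList l

lemma realize_conjList {W : Type*} [L.Structure W] (l : List (L.Formula β)) (v : β → W) :
    (conjList l).Realize v ↔ ∀ φ ∈ l, φ.Realize v := by
  induction l with
  | nil => simp [conjList]
  | cons φ l ih => simp [conjList, ih]

/-- A formula or its negation, according to a boolean. -/
def withBool (b : Bool) (φ : L.Formula β) : L.Formula β := if b then φ else φ.not

lemma realize_withBool {W : Type*} [L.Structure W] (b : Bool) (φ : L.Formula β) (v : β → W) :
    (withBool b φ).Realize v ↔ (decide (φ.Realize v) = b) := by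
  cases b <;> simp [withBool]

variable [L.IsRelational]

/-- Atomic relation formula for a query. -/
def qRel {e : ℕ} {RL : List (Σ k, L.Relations k)} {γ : Type w}
    (j : Fin RL.length) (ts : Fin (RL.get j).1 → (Fin e ⊕ γ)) : L.Formula (Fin e ⊕ γ) :=
  BoundedFormula.rel (RL.get j).2 (fun i => Term.var (Sum.inl (ts i)))

lemma realize_qRel {e : ℕ} {RL : List (Σ k, L.Relations k)} {γ : Type w}
    {W : Type*} [L.Structure W] (j : Fin RL.length) (ts : Fin (RL.get j).1 → (Fin e ⊕ γ))
    (v : (Fin e ⊕ γ) → W) :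
    (qRel j ts).Realize v ↔ RelMap (RL.get j).2 (v ∘ ts) := by
  simp [qRel, Formula.Realize, BoundedFormula.Realize, Term.realize]
  rfl

/-- Atomic equality formula for a query. -/
def qEq {e : ℕ} {γ : Type w} (x y : Fin e ⊕ γ) : L.Formula (Fin e ⊕ γ) :=
  Term.bdEqual (Term.var (Sum.inl x)) (Term.var (Sum.inl y))

lemma realize_qEq {e : ℕ} {γ : Type w} {W : Type*} [L.Structure W] (x y : Fin e ⊕ γ)
    (v : (Fin e ⊕ γ) → W) : (qEq (L := L) x y).Realize v ↔ (v x = v y) := by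
  simp [qEq, Formula.Realize, BoundedFormula.Realize, Term.bdEqual, Term.realize]

/-- The formula asserting that the atomic pattern equals `c`. -/
noncomputable def patternFormula (e : ℕ) (RL : List (Σ k, L.Relations k)) (γ : Type w)
    [Fintype γ] (c : PatColour e RL γ) : L.Formula (Fin e ⊕ γ) :=
  conjList
    (((List.finRange RL.length).flatMap fun j =>
        (Finset.univ : Finset (Fin (RL.get j).1 → (Fin e ⊕ γ))).toList.map fun ts =>
          withBool (c.1 j ts) (qRel j ts)) ++
      ((Finset.univ : Finset ((Fin e ⊕ γ) × (Fin e ⊕ γ))).toList.map fun p =>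
        withBool (c.2 p.1 p.2) (qEq p.1 p.2)))

lemma realize_patternFormula (e : ℕ) (RL : List (Σ k, L.Relations k)) (γ : Type w)
    [Fintype γ] (c : PatColour e RL γ) {W : Type*} [L.Structure W]
    (w : Fin e → W) (v : γ → W) :
    (patternFormula e RL γ c).Realize (Sum.elim w v) ↔ pattern e RL w v = c := by
  rw [patternFormula, realize_conjList]
  constructor
  · intro H
    refine Prod.ext (funext fun j => funext fun ts => ?_) (funext fun x => funext fun y => ?_)
    · have := H (withBool (c.1 j ts) (qRel j ts)) (by
        refine List.mem_append_left _ ?_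
        refine List.mem_flatMap.2 ⟨j, List.mem_finRange j, ?_⟩
        exact List.mem_map.2 ⟨ts, by simp, rfl⟩)
      rw [realize_withBool, realize_qRel] at this
      simpa [pattern] using this
    · have := H (withBool (c.2 x y) (qEq x y)) (by
        refine List.mem_append_right _ ?_
        exact List.mem_map.2 ⟨(x, y), by simp, rfl⟩)
      rw [realize_withBool, realize_qEq] at this
      simpa [pattern] using this
  · rintro rfl φ hφ
    rcases List.mem_append.1 hφ with hφ | hφ
    · obtain ⟨j, -, hφ⟩ := List.mem_flatMap.1 hφ
      obtain ⟨ts, -, rfl⟩ := List.mem_map.1 hφ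
      rw [realize_withBool, realize_qRel]
      simp [pattern]
    · obtain ⟨p, -, rfl⟩ := List.mem_map.1 hφ
      rw [realize_withBool, realize_qEq]
      simp [pattern]

end Formulas


section Sys

variable [L.IsRelational] {M : Type w} [L.Structure M] {A : Type w} [L.Structure A] {e : ℕ}

attribute [local instance] finsetStr

/-- A "system": an elementary extension of `M` together with a parameter tuple. -/
structure Sys (L : FirstOrder.Language.{u, v}) (M : Type w) [L.Structure M] (e : ℕ) where
  N : Bundled.{w} L.Structure
  emb : M ↪ₑ[L] N
  eb : Fin e → N

/-- The pattern colouring of copies of `S` induced by a system. -/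
noncomputable def sysColour (RL : List (Σ k, L.Relations k)) (sys : Sys L M e) (S : Finset A)
    (u : ({x // x ∈ S}) ↪[L] M) : PatColour e RL {x // x ∈ S} :=
  pattern e RL sys.eb (fun a => sys.emb (u a))

/-- The pattern colouring of a system is constant on copies of `S`. -/
def AllConst (RL : List (Σ k, L.Relations k)) (sys : Sys L M e) (S : Finset A) : Prop :=
  ∃ c, ∀ u, sysColour RL sys S u = c

/-- `sys'` is reachable from `sys`: colours of `sys'` on any finite window can be realized as
`sys`-colours after moving the window by an automorphism. -/
def Reach (A : Type w) [L.Structure A] (RL : List (Σ k, L.Relations k))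
    (sys' sys : Sys L M e) : Prop :=
  ∀ V : Finset M, ∃ g : M ≃[L] M, ∀ (S : Finset A) (u : ({x // x ∈ S}) ↪[L] M),
    Set.range (u : _ → M) ⊆ (V : Set M) →
      sysColour RL sys S (g.toEmbedding.comp u) = sysColour RL sys' S u

lemma Reach.refl (RL : List (Σ k, L.Relations k)) (sys : Sys L M e) : Reach A RL sys sys := by
  intro V
  refine ⟨FirstOrder.Language.Equiv.refl L M, fun S u _ => ?_⟩
  have heq : (FirstOrder.Language.Equiv.refl L M).toEmbedding.comp u = u := by ext a; rfl
  rw [heq]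

lemma Reach.comp (RL : List (Σ k, L.Relations k)) {sys₁ sys₂ sys₃ : Sys L M e}
    (h21 : Reach A RL sys₂ sys₁) (h32 : Reach A RL sys₃ sys₂) : Reach A RL sys₃ sys₁ := by
  intro V
  obtain ⟨g₂, hg₂⟩ := h32 V
  obtain ⟨g₁, hg₁⟩ := h21 (V.image g₂)
  refine ⟨g₁.comp g₂, fun S u hu => ?_⟩
  have h1 : Set.range ((g₂.toEmbedding.comp u : _ ↪[L] M) : _ → M) ⊆ ((V.image g₂ : Finset M) : Set M) := by
    rintro x ⟨a, rfl⟩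
    simp only [Finset.coe_image]
    exact ⟨u a, hu ⟨a, rfl⟩, rfl⟩
  have := hg₁ S (g₂.toEmbedding.comp u) h1
  have heq : (g₁.toEmbedding.comp (g₂.toEmbedding.comp u)) = ((g₁.comp g₂).toEmbedding.comp u) := by
    ext a; rfl
  rw [heq] at this
  rw [this, hg₂ S u hu]

/-- The pattern colouring of a system is externally definable. -/
lemma extDefinable_sysColour (RL : List (Σ k, L.Relations k)) (sys : Sys L M e) (S : Finset A) :
    ExtDefinable L M {x // x ∈ S}
      (fun u => (Fintype.equivFin (PatColour e RL {x // x ∈ S})) (sysColour RL sys S u)) := by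
  refine ⟨e, fun i => patternFormula e RL _ ((Fintype.equivFin _).symm i), sys.N, sys.emb, sys.eb,
    fun u i => ?_⟩
  rw [realize_patternFormula]
  exact (Fintype.equivFin _).apply_eq_iff_eq_symm_apply

lemma finite_small_embs (γ : Type w) [L.Structure γ] [Finite γ] (V : Finset M) :
    Finite {u : γ ↪[L] M // Set.range (u : γ → M) ⊆ (V : Set M)} := by
  refine Finite.of_injective
    (fun p => (fun a => (⟨p.1 a, p.2 ⟨a, rfl⟩⟩ : {y // y ∈ V})) : _ → (γ → {y // y ∈ V})) ?_
  intro p q hpq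
  refine Subtype.ext (Embedding.ext fun a => ?_)
  have := congrFun hpq a
  exact congrArg Subtype.val this

end Sys
section Stage

variable [L.IsRelational] {M : Type w} [L.Structure M] {A : Type w} [L.Structure A] {e : ℕ}

attribute [local instance] finsetStr

lemma stage (t : ℕ) [Finite A] [Nonempty M]
    (hM : L.IsUltrahomogeneous M)
    (hRam : ∀ (A' : Type w) [L.Structure A'], Finite A' → Nat.card A' < t →
      Nonempty (A' ↪[L] M) → ExtDefARamsey L M A')
    (f₀ : A ↪[L] M) (RL : List (Σ k, L.Relations k))
    (sys : Sys L M e) (S₀ : Finset A) (hS₀ : S₀.card < t) :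
    ∃ sys' : Sys L M e, Reach A RL sys' sys ∧ AllConst RL sys' S₀ ∧
      ∀ S : Finset A, AllConst RL sys S → AllConst RL sys' S := by
  classical
  -- Step 1: for every finite window, an automorphism making the S₀-colour constant on it
  have key : ∀ F : Finset M, ∃ g : M ≃[L] M,
      ∀ u₁ u₂ : ({x // x ∈ S₀}) ↪[L] M, Set.range (u₁ : _ → M) ⊆ (F : Set M) →
        Set.range (u₂ : _ → M) ⊆ (F : Set M) →
        sysColour RL sys S₀ (g.toEmbedding.comp u₁) = sysColour RL sys S₀ (g.toEmbedding.comp u₂) := by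
    intro F
    let SF : L.Substructure M := { carrier := (F : Set M), fun_mem := fun {n} f => isEmptyElim f }
    have hSFfg : SF.FG := by
      refine ⟨F, le_antisymm ((Substructure.closure_le).2 (fun x hx => hx)) ?_⟩
      intro x hx
      exact Substructure.subset_closure hx
    haveI : Finite (↥SF) :=
      Finite.of_injective (fun x => (⟨x.1, x.2⟩ : {y // y ∈ F}))
        (fun a b hab => Subtype.ext (congrArg Subtype.val hab))
    have hcard : Nat.card {x // x ∈ S₀} < t := by
      rw [Nat.card_eq_finsetCard]; exact hS₀
    have hne : Nonempty (({x // x ∈ S₀}) ↪[L] M) := ⟨f₀.comp (inclS S₀)⟩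
    obtain ⟨gB, hmono⟩ :=
      hRam {x // x ∈ S₀} inferInstance hcard hne
        (Fintype.card (PatColour e RL {x // x ∈ S₀})) Fintype.card_pos
        (↥SF) inferInstance ⟨SF.subtype⟩
        (fun u => (Fintype.equivFin (PatColour e RL {x // x ∈ S₀})) (sysColour RL sys S₀ u))
        (extDefinable_sysColour RL sys S₀)
    obtain ⟨ghat, hghat⟩ := hM SF hSFfg gB
    refine ⟨ghat, ?_⟩
    intro u₁ u₂ h₁ h₂
    have hr : ∀ (u : ({x // x ∈ S₀}) ↪[L] M), Set.range (u : _ → M) ⊆ (F : Set M) →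
        Set.range ((ghat.toEmbedding.comp u) : _ → M) ⊆ Set.range (gB : ↥SF → M) := by
      rintro u hu x ⟨a, rfl⟩
      refine ⟨⟨u a, hu ⟨a, rfl⟩⟩, ?_⟩
      rw [hghat]; rfl
    exact (Fintype.equivFin _).injective (hmono _ _ (hr u₁ h₁) (hr u₂ h₂))
  choose ghat hghat using key
  -- Step 2: ultrafilter on windows
  haveI : Nonempty (Finset M) := ⟨∅⟩
  let U : Ultrafilter (Finset M) := Ultrafilter.of atTop
  have hU : ∀ F₀ : Finset M, {F | F₀ ⊆ F} ∈ (U : Filter (Finset M)) := by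
    intro F₀
    exact Ultrafilter.of_le atTop (Filter.Ici_mem_atTop F₀)
  -- Step 3: the ultraproduct system
  haveI hNne : Nonempty ↥(sys.N) := ⟨sys.emb (Classical.arbitrary M)⟩
  have hpt : ∀ (F : Finset M) (n : ℕ) (φ : L.Formula (Fin n)) (x : Fin n → M),
      (φ.Realize fun i => sys.emb (ghat F (x i))) ↔ φ.Realize x := by
    intro F n φ x
    have h1 := sys.emb.map_formula φ (fun i => ghat F (x i))
    have h2 := (ghat F).toElementaryEmbedding.map_formula φ x
    have h1' : (φ.Realize fun i => sys.emb (ghat F (x i))) ↔ φ.Realize fun i => ghat F (x i) := by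
      simpa [Function.comp_def] using h1
    have h2' : (φ.Realize fun i => ghat F (x i)) ↔ φ.Realize x := by
      simpa [Function.comp_def] using h2
    exact h1'.trans h2'
  let emb' : M ↪ₑ[L] ((U : Filter (Finset M)).Product fun _ => ↥(sys.N)) :=
    { toFun := fun x => (↑(fun F => sys.emb (ghat F x)) :
        (U : Filter (Finset M)).Product fun _ => ↥(sys.N))
      map_formula' := by
        intro n φ x
        change φ.Realize (fun i => (↑(fun F => sys.emb (ghat F (x i))) :
            (U : Filter (Finset M)).Product fun _ => ↥(sys.N))) ↔ φ.Realize x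
        rw [Ultraproduct.realize_formula_cast]
        simp only [hpt]
        exact eventually_const }
  let sys' : Sys L M e :=
    ⟨Bundled.of ((U : Filter (Finset M)).Product fun _ => ↥(sys.N)), emb',
      fun i => (↑(fun _ : Finset M => sys.eb i) : (U : Filter (Finset M)).Product fun _ => ↥(sys.N))⟩
  -- Step 4: pointwise limit description of the colours of sys'
  have hptwise : ∀ (S : Finset A) (u : ({x // x ∈ S}) ↪[L] M),
      {F | sysColour RL sys S ((ghat F).toEmbedding.comp u) = sysColour RL sys' S u}
        ∈ (U : Filter (Finset M)) := by
    intro S u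
    have hval : ∀ (z : Fin e ⊕ {x // x ∈ S}),
        (Sum.elim sys'.eb (fun a => sys'.emb (u a)) z) =
          (↑(fun F => Sum.elim sys.eb (fun a => sys.emb (ghat F (u a))) z) :
            (U : Filter (Finset M)).Product fun _ => ↥(sys.N)) := by
      rintro (p | a) <;> rfl
    have hrelcomp : ∀ (j : Fin RL.length) (ts : Fin (RL.get j).1 → Fin e ⊕ {x // x ∈ S}),
        ∀ᶠ F in (U : Filter (Finset M)),
          (sysColour RL sys S ((ghat F).toEmbedding.comp u)).1 j ts =
            (sysColour RL sys' S u).1 j ts := by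
      intro j ts
      have hP : RelMap (RL.get j).2 ((Sum.elim sys'.eb fun a => sys'.emb (u a)) ∘ ts) ↔
          ∀ᶠ F in (U : Filter (Finset M)),
            RelMap (RL.get j).2
              ((Sum.elim sys.eb fun a => sys.emb (ghat F (u a))) ∘ ts) := by
        rw [show ((Sum.elim sys'.eb fun a => sys'.emb (u a)) ∘ ts) =
            fun i => (↑(fun F => (Sum.elim sys.eb fun a => sys.emb (ghat F (u a))) (ts i)) :
              (U : Filter (Finset M)).Product fun _ => ↥(sys.N)) from
          funext fun i => hval (ts i)]
        exact relMap_quotient_mk'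
          ((U : Filter (Finset M)).productSetoid fun _ : Finset M => ↥(sys.N)) (RL.get j).2
          (fun i F => (Sum.elim sys.eb fun a => sys.emb (ghat F (u a))) (ts i))
      by_cases hp : RelMap (RL.get j).2 ((Sum.elim sys'.eb fun a => sys'.emb (u a)) ∘ ts)
      · filter_upwards [hP.1 hp] with F hF
        exact decide_eq_decide.2 (iff_of_true hF hp)
      · have hev : ∀ᶠ F in (U : Filter (Finset M)),
            ¬ RelMap (RL.get j).2 ((Sum.elim sys.eb fun a => sys.emb (ghat F (u a))) ∘ ts) :=
          (Ultrafilter.eventually_not (f := U)).2 (fun hc => hp (hP.2 hc))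
        filter_upwards [hev] with F hF
        exact decide_eq_decide.2 (iff_of_false hF hp)
    have heqcomp : ∀ (x y : Fin e ⊕ {x // x ∈ S}),
        ∀ᶠ F in (U : Filter (Finset M)),
          (sysColour RL sys S ((ghat F).toEmbedding.comp u)).2 x y =
            (sysColour RL sys' S u).2 x y := by
      intro x y
      have hP : (Sum.elim sys'.eb (fun a => sys'.emb (u a)) x =
            Sum.elim sys'.eb (fun a => sys'.emb (u a)) y) ↔
          ∀ᶠ F in (U : Filter (Finset M)),
            (Sum.elim sys.eb (fun a => sys.emb (ghat F (u a))) x =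
              Sum.elim sys.eb (fun a => sys.emb (ghat F (u a))) y) := by
        rw [hval x, hval y]
        exact Quotient.eq''
      by_cases hp : (Sum.elim sys'.eb (fun a => sys'.emb (u a)) x =
          Sum.elim sys'.eb (fun a => sys'.emb (u a)) y)
      · filter_upwards [hP.1 hp] with F hF
        exact decide_eq_decide.2 (iff_of_true hF hp)
      · have hev := (Ultrafilter.eventually_not (f := U)).2 (fun hc => hp (hP.2 hc))
        filter_upwards [hev] with F hF
        exact decide_eq_decide.2 (iff_of_false hF hp)
    have H1 : ∀ᶠ F in (U : Filter (Finset M)), ∀ j ts,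
        (sysColour RL sys S ((ghat F).toEmbedding.comp u)).1 j ts =
          (sysColour RL sys' S u).1 j ts :=
      Filter.eventually_all.2 fun j => Filter.eventually_all.2 fun ts => hrelcomp j ts
    have H2 : ∀ᶠ F in (U : Filter (Finset M)), ∀ x y,
        (sysColour RL sys S ((ghat F).toEmbedding.comp u)).2 x y =
          (sysColour RL sys' S u).2 x y :=
      Filter.eventually_all.2 fun x => Filter.eventually_all.2 fun y => heqcomp x y
    filter_upwards [H1, H2] with F h1 h2
    exact Prod.ext (funext fun j => funext fun ts => h1 j ts)
      (funext fun x => funext fun y => h2 x y)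
  haveI : Fintype A := Fintype.ofFinite A
  refine ⟨sys', ?_, ?_, ?_⟩
  · -- Reach
    intro V
    haveI : ∀ S : Finset A,
        Finite {u : ({x // x ∈ S}) ↪[L] M // Set.range (u : _ → M) ⊆ (V : Set M)} :=
      fun S => finite_small_embs _ V
    have HH : ∀ᶠ F in (U : Filter (Finset M)), ∀ (S : Finset A)
        (p : {u : ({x // x ∈ S}) ↪[L] M // Set.range (u : _ → M) ⊆ (V : Set M)}),
        sysColour RL sys S ((ghat F).toEmbedding.comp p.1) = sysColour RL sys' S p.1 :=
      Filter.eventually_all.2 fun S => Filter.eventually_all.2 fun p => hptwise S p.1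
    obtain ⟨F, hF⟩ := Ultrafilter.nonempty_of_mem HH
    exact ⟨ghat F, fun S u hu => hF S ⟨u, hu⟩⟩
  · -- AllConst S₀
    set u₀ : ({x // x ∈ S₀}) ↪[L] M := f₀.comp (inclS S₀) with hu₀
    refine ⟨sysColour RL sys' S₀ u₀, fun u => ?_⟩
    have hfin : (Set.range (u : _ → M) ∪ Set.range (u₀ : _ → M)).Finite :=
      (Set.finite_range _).union (Set.finite_range _)
    have hmem : {F : Finset M |
        (Set.range (u : _ → M) ∪ Set.range (u₀ : _ → M)) ⊆ (F : Set M)}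
          ∈ (U : Filter (Finset M)) := by
      refine Filter.mem_of_superset (hU hfin.toFinset) ?_
      intro F hFsub x hx
      exact hFsub (hfin.mem_toFinset.2 hx)
    obtain ⟨F, hF⟩ := Ultrafilter.nonempty_of_mem
      (inter_mem (inter_mem (hptwise S₀ u) (hptwise S₀ u₀)) hmem)
    obtain ⟨⟨hF1, hF2⟩, hF3⟩ := hF
    calc sysColour RL sys' S₀ u
        = sysColour RL sys S₀ ((ghat F).toEmbedding.comp u) := hF1.symm
      _ = sysColour RL sys S₀ ((ghat F).toEmbedding.comp u₀) :=
          hghat F u u₀ (fun x hx => hF3 (Set.mem_union_left _ hx))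
            (fun x hx => hF3 (Set.mem_union_right _ hx))
      _ = sysColour RL sys' S₀ u₀ := hF2
  · -- preservation
    rintro S ⟨c, hc⟩
    refine ⟨c, fun u => ?_⟩
    obtain ⟨F, hF⟩ := Ultrafilter.nonempty_of_mem (hptwise S u)
    rw [← hF, hc]

end Stage
section Chain

variable [L.IsRelational] {M : Type w} [L.Structure M] {A : Type w} [L.Structure A] {e : ℕ}

attribute [local instance] finsetStr

lemma chain (t : ℕ) [Finite A] [Nonempty M]
    (hM : L.IsUltrahomogeneous M)
    (hRam : ∀ (A' : Type w) [L.Structure A'], Finite A' → Nat.card A' < t →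
      Nonempty (A' ↪[L] M) → ExtDefARamsey L M A')
    (f₀ : A ↪[L] M) (RL : List (Σ k, L.Relations k))
    (SL : List (Finset A)) (hSL : ∀ S ∈ SL, S.card < t) :
    ∀ sys : Sys L M e, ∃ sys' : Sys L M e, Reach A RL sys' sys ∧
      (∀ S ∈ SL, AllConst RL sys' S) ∧
      (∀ S : Finset A, AllConst RL sys S → AllConst RL sys' S) := by
  induction SL with
  | nil =>
    intro sys
    exact ⟨sys, Reach.refl RL sys, by simp, fun S h => h⟩
  | cons S₀ SL ih =>
    intro sys
    obtain ⟨sys₁, hr₁, hc₁, hp₁⟩ := stage t hM hRam f₀ RL sys S₀ (hSL S₀ (by simp))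
    obtain ⟨sys₂, hr₂, hc₂, hp₂⟩ := ih (fun S hS => hSL S (by simp [hS])) sys₁
    refine ⟨sys₂, Reach.comp RL hr₁ hr₂, ?_, fun S h => hp₂ S (hp₁ S h)⟩
    intro S hS
    rcases List.mem_cons.1 hS with rfl | hS
    · exact hp₂ S hc₁
    · exact hc₂ S hS

end Chain

section Main

attribute [local instance] finsetStr

/-- **Lemma 3.14.** Let `L` have maximum arity `t ≥ 2` and let `M` be ultrahomogeneous with
`Th(M)` having QE. If `M` has the externally definable `ā`-Ramsey property for all
`ā ∈ Age(M)` with `|ā| < t`, then `M` has the externally definable Ramsey property. -/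
theorem extDefRamsey_of_small (L : FirstOrder.Language.{u, v}) [L.IsRelational]
    [Countable L.Symbols] (t : ℕ) (ht : 2 ≤ t)
    (harity : ∀ n : ℕ, t < n → IsEmpty (L.Relations n))
    (M : Type w) [L.Structure M] (hM : L.IsUltrahomogeneous M) (hQE : HasQE L M)
    (h : ∀ (A : Type w) [L.Structure A], Finite A → Nat.card A < t →
      Nonempty (A ↪[L] M) → ExtDefARamsey L M A) :
    ExtDefRamsey L M := by
  intro A iA finA neA
  by_cases hsmall : Nat.card A < t
  · exact h A finA hsmall neA
  intro k hk B iB finB neB χ hχ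
  obtain ⟨f₀⟩ := neA
  obtain ⟨gB⟩ := neB
  haveI : Nonempty A := (Nat.card_pos_iff.1 (by omega)).1
  haveI : Nonempty M := ⟨f₀ (Classical.arbitrary A)⟩
  haveI : Fintype A := Fintype.ofFinite A
  haveI : Fintype B := Fintype.ofFinite B
  classical
  obtain ⟨e, φs, N, emb, eb, hiff⟩ := hχ
  haveI hNne : Nonempty ↥N := ⟨emb (Classical.arbitrary M)⟩
  haveI hNmod : (↥N) ⊨ L.completeTheory M := (emb.theory_model_iff _).1 inferInstance
  -- Step 1: quantifier-free equivalents
  let E : (Fin e ⊕ A) ≃ Fin (e + Fintype.card A) :=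
    (Equiv.sumCongr (Equiv.refl _) (Fintype.equivFin A)).trans finSumFinEquiv
  have qf : ∀ i : Fin k, ∃ ψ : L.Formula (Fin e ⊕ A), ψ.IsQF ∧
      ∀ (v : (Fin e ⊕ A) → ↥N), ((φs i).Realize v ↔ ψ.Realize v) := by
    intro i
    obtain ⟨ψ', hqf, hIff⟩ := hQE _ ((φs i).relabel E)
    refine ⟨ψ'.relabel E.symm, hqf.relabel _, fun v => ?_⟩
    have hVE : (v ∘ E.symm) ∘ E = v := funext fun z => congrArg v (E.symm_apply_apply z)
    calc (φs i).Realize v ↔ ((φs i).relabel E).Realize (v ∘ E.symm) := by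
          rw [Formula.realize_relabel, hVE]
      _ ↔ ψ'.Realize (v ∘ E.symm) := hIff.realize_iff
      _ ↔ (ψ'.relabel E.symm).Realize v := (Formula.realize_relabel).symm
  choose ψs hψqf hψiff using qf
  -- Step 2: the list of relation symbols and the pattern chain
  set RL : List (Σ n, L.Relations n) := (List.finRange k).flatMap (fun i => relList (ψs i))
    with hRLdef
  have hRLsub : ∀ i : Fin k, ∀ p ∈ relList (ψs i), p ∈ RL := by
    intro i p hp
    exact List.mem_flatMap.2 ⟨i, List.mem_finRange i, hp⟩
  set SL : List (Finset A) := ((Finset.univ : Finset (Finset A)).filter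
    (fun S => S.card ≤ t - 1)).toList with hSLdef
  have hSLmem : ∀ S : Finset A, S.card ≤ t - 1 → S ∈ SL := by
    intro S hS
    rw [hSLdef, Finset.mem_toList, Finset.mem_filter]
    exact ⟨Finset.mem_univ _, hS⟩
  obtain ⟨sys₁, hreach, hconsts, -⟩ := chain (e := e) t hM h f₀ RL SL
    (fun S hS => by
      rw [hSLdef, Finset.mem_toList, Finset.mem_filter] at hS
      omega) ⟨N, emb, eb⟩
  -- Step 3: pull a copy of B back into M
  set V : Finset M := Finset.image gB Finset.univ with hVdef
  obtain ⟨g, hg⟩ := hreach V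
  refine ⟨g.toEmbedding.comp gB, ?_⟩
  intro f₁ f₂ h₁ h₂
  -- the small patterns agree on f₁ and f₂
  have hpair : ∀ S : Finset A, S.card ≤ t - 1 →
      sysColour RL (⟨N, emb, eb⟩ : Sys L M e) S (f₁.comp (inclS S)) =
        sysColour RL (⟨N, emb, eb⟩ : Sys L M e) S (f₂.comp (inclS S)) := by
    intro S hS
    obtain ⟨c, hc⟩ := hconsts S (hSLmem S hS)
    have key : ∀ f : A ↪[L] M,
        Set.range (f : A → M) ⊆ Set.range ((g.toEmbedding.comp gB : B ↪[L] M) : B → M) →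
        sysColour RL (⟨N, emb, eb⟩ : Sys L M e) S (f.comp (inclS S)) = c := by
      intro f hf
      set u : ({x // x ∈ S}) ↪[L] M := g.symm.toEmbedding.comp (f.comp (inclS S)) with hu
      have hrange : Set.range (u : _ → M) ⊆ (V : Set M) := by
        rintro x ⟨a, rfl⟩
        have hmemr : (f.comp (inclS S)) a ∈ Set.range (f : A → M) :=
          ⟨(inclS (L := L) S) a, rfl⟩
        obtain ⟨b, hb⟩ := hf hmemr
        have hx : u a = gB b := by
          show g.symm ((f.comp (inclS S)) a) = gB b
          rw [← hb]
          exact g.symm_apply_apply _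
        rw [hx, hVdef]
        simp
      have hcomp : g.toEmbedding.comp u = f.comp (inclS S) := by
        ext a
        exact g.apply_symm_apply _
      have := hg S u hrange
      rw [hcomp] at this
      rw [this, hc]
    exact (key f₁ h₁).trans (key f₂ h₂).symm
  -- Step 4: transfer along the support lemma
  set v₁ : (Fin e ⊕ A) → ↥N := Sum.elim eb (fun a => emb (f₁ a)) with hv₁
  set v₂ : (Fin e ⊕ A) → ↥N := Sum.elim eb (fun a => emb (f₂ a)) with hv₂
  have heq : ∀ x y : Fin e ⊕ A, (v₁ x = v₁ y) ↔ (v₂ x = v₂ y) := by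
    have hmix : ∀ (p : Fin e) (a : A), (eb p = emb (f₁ a)) ↔ (eb p = emb (f₂ a)) := by
      intro p a
      have hcard : ({a} : Finset A).card ≤ t - 1 := by
        rw [Finset.card_singleton]; omega
      have hp := hpair {a} hcard
      have := congrFun (congrFun (congrArg Prod.snd hp) (Sum.inl p))
        (Sum.inr ⟨a, Finset.mem_singleton_self a⟩)
      exact decide_eq_decide.1 this
    rintro (p | a) (q | b)
    · exact Iff.rfl
    · exact hmix p b
    · constructor
      · intro hh
        exact ((hmix q a).1 hh.symm).symm
      · intro hh
        exact ((hmix q a).2 hh.symm).symm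
    · constructor
      · intro hh
        have : a = b := f₁.injective (emb.injective hh)
        rw [this]
      · intro hh
        have : a = b := f₂.injective (emb.injective hh)
        rw [this]
  have hRel : ∀ (r : ℕ) (R : L.Relations r) (ts : Fin r → Fin e ⊕ A),
      (⟨r, R⟩ : Σ n, L.Relations n) ∈ RL →
      (RelMap R (v₁ ∘ ts) ↔ RelMap R (v₂ ∘ ts)) := by
    intro r R ts hmemRL
    by_cases hallr : ∀ i : Fin r, ∃ a : A, ts i = Sum.inr a
    · -- no parameters occur: transfer along the embeddings
      choose σ hσ using hallr
      have hts : ts = Sum.inr ∘ σ := funext hσ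
      subst hts
      have e₁ : RelMap R (v₁ ∘ (Sum.inr ∘ σ)) ↔ RelMap R σ := by
        have h1 : (v₁ ∘ (Sum.inr ∘ σ)) = (emb.toEmbedding : M → ↥N) ∘ ((f₁ : A → M) ∘ σ) := rfl
        rw [h1]
        rw [Embedding.map_rel, Embedding.map_rel]
      have e₂ : RelMap R (v₂ ∘ (Sum.inr ∘ σ)) ↔ RelMap R σ := by
        have h1 : (v₂ ∘ (Sum.inr ∘ σ)) = (emb.toEmbedding : M → ↥N) ∘ ((f₂ : A → M) ∘ σ) := rfl
        rw [h1]
        rw [Embedding.map_rel, Embedding.map_rel]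
      exact e₁.trans e₂.symm
    · -- some parameter occurs: the A-support is small
      push_neg at hallr
      obtain ⟨i₀, hi₀⟩ := hallr
      obtain ⟨p₀, hp₀⟩ : ∃ p, ts i₀ = Sum.inl p := by
        cases hts : ts i₀ with
        | inl p => exact ⟨p, rfl⟩
        | inr a => exact (hi₀ a hts).elim
      have hrt : r ≤ t := by
        by_contra hrt
        exact (harity r (by omega)).elim R
      set sF : (Fin e ⊕ A) → Finset A := Sum.elim (fun _ => ∅) (fun a => {a}) with hsF
      set S : Finset A := Finset.univ.biUnion (fun i => sF (ts i)) with hSdef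
      have hmemS : ∀ (i : Fin r) (a : A), ts i = Sum.inr a → a ∈ S := by
        intro i a hts
        rw [hSdef]
        refine Finset.mem_biUnion.2 ⟨i, Finset.mem_univ _, ?_⟩
        rw [hts, hsF]
        simp
      have hScard : S.card ≤ t - 1 := by
        have h1 : S.card ≤ ∑ i : Fin r, (sF (ts i)).card := Finset.card_biUnion_le
        have h2 : ∑ i : Fin r, (sF (ts i)).card =
            (sF (ts i₀)).card + ∑ i ∈ Finset.univ.erase i₀, (sF (ts i)).card :=
          (Finset.add_sum_erase _ _ (Finset.mem_univ i₀)).symm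
        have h3 : (sF (ts i₀)).card = 0 := by rw [hp₀, hsF]; simp
        have h4 : ∑ i ∈ Finset.univ.erase i₀, (sF (ts i)).card ≤
            (Finset.univ.erase i₀).card * 1 := by
          refine Finset.sum_le_card_nsmul _ _ 1 ?_
          intro i _
          rw [hsF]
          cases ts i <;> simp
        have h5 : (Finset.univ.erase i₀).card = r - 1 := by
          rw [Finset.card_erase_of_mem (Finset.mem_univ i₀)]
          simp
        omega
      -- factor `ts` through the subset `S`
      have hts'0 : ∀ i : Fin r, ∃ z : Fin e ⊕ {x // x ∈ S},
          (Sum.elim (Sum.inl : Fin e → Fin e ⊕ A)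
            (fun a : {x // x ∈ S} => Sum.inr (a : A))) z = ts i := by
        intro i
        cases hh : ts i with
        | inl p => exact ⟨Sum.inl p, rfl⟩
        | inr a => exact ⟨Sum.inr ⟨a, hmemS i a hh⟩, rfl⟩
      choose ts' hts' using hts'0
      have hp := hpair S hScard
      have Hgen : ∀ (p : Σ n, L.Relations n), p ∈ RL →
          ∀ (ts'' : Fin p.1 → Fin e ⊕ {x // x ∈ S}),
          (RelMap p.2
              ((Sum.elim eb (fun a => emb ((f₁.comp (inclS S)) a))) ∘ ts'') ↔
            RelMap p.2
              ((Sum.elim eb (fun a => emb ((f₂.comp (inclS S)) a))) ∘ ts'')) := by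
        intro p hmem ts''
        obtain ⟨jn, hjn, hjeq⟩ := List.mem_iff_getElem.1 hmem
        subst hjeq
        exact decide_eq_decide.1 (congrFun (congrFun (congrArg Prod.fst hp) ⟨jn, hjn⟩) ts'')
      have Hinst := Hgen ⟨r, R⟩ hmemRL ts'
      have hval : ∀ (vv : (Fin e ⊕ A) → ↥N), (∀ p : Fin e, vv (Sum.inl p) = eb p) →
          ((Sum.elim eb (fun a : {x // x ∈ S} =>
            vv (Sum.inr (a : A)))) ∘ ts') = vv ∘ ts := by
        intro vv hvv
        funext i
        show Sum.elim eb (fun a : {x // x ∈ S} => vv (Sum.inr (a : A))) (ts' i) = vv (ts i)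
        rw [show ts i = (Sum.elim (Sum.inl : Fin e → Fin e ⊕ A)
          (fun a : {x // x ∈ S} => Sum.inr (a : A))) (ts' i) from (hts' i).symm]
        cases ts' i with
        | inl p => exact (hvv p).symm
        | inr a => rfl
      have hv1 : ((Sum.elim eb (fun a => emb ((f₁.comp (inclS S)) a))) ∘ ts') = v₁ ∘ ts :=
        hval v₁ (fun p => rfl)
      have hv2 : ((Sum.elim eb (fun a => emb ((f₂.comp (inclS S)) a))) ∘ ts') = v₂ ∘ ts :=
        hval v₂ (fun p => rfl)
      rw [hv1, hv2] at Hinst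
      exact Hinst
  -- Step 5: conclude
  have hcolour : χ f₁ = χ f₂ := by
    set i₁ := χ f₁ with hi₁
    have r₁ : (φs i₁).Realize v₁ := (hiff f₁ i₁).1 rfl
    have r₁' : (ψs i₁).Realize v₁ := (hψiff i₁ v₁).1 r₁
    have r₂' : (ψs i₁).Realize v₂ :=
      (support_lemma (hψqf i₁) v₁ v₂ heq (fun r R ts hmem => hRel r R ts (hRLsub i₁ _ hmem))).1 r₁'
    have r₂ : (φs i₁).Realize v₂ := (hψiff i₁ v₂).2 r₂'
    exact ((hiff f₂ i₁).2 r₂).symm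
  exact hcolour

end Main

end EDRP
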